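/- Let R = (0, l) x (-h, h) with l, h > 0, and let v = (u1, u2) : R -> R^2 be a harmonic vector field (each component harmonic, sufficiently smooth up to the flat parts of the boundary) satisfying div v = 0 in R and v = 0 on the horizontal segments (0, l) x {h} and (0, l) x {-h}. Then v is identically zero in R. -/

import Mathlib

open Set

/-- Second directional derivative of `f` in direction `v` (applied twice). -/
noncomputable def d2 (f : ℝ × ℝ → ℝ) (v : ℝ × ℝ) (p : ℝ × ℝ) : ℝ :=
  fderiv ℝ (fun q => fderiv ℝ f q v) p v

open Complex Filter MeasureTheory intervalIntegral Metric

lemma convex_reProdIm {s t : Set ℝ} (hs : Convex ℝ s) (ht : Convex ℝ t) :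
    Convex ℝ (s ×ℂ t) := by
  intro z hz w hw a b ha hb hab
  rw [Complex.mem_reProdIm] at hz hw ⊢
  constructor
  · simpa using hs hz.1 hw.1 ha hb hab
  · simpa using ht hz.2 hw.2 ha hb hab

lemma hasDerivAt_of_CR {F G : ℝ × ℝ → ℝ} {A B : ℝ × ℝ →L[ℝ] ℝ} {z₀ : ℂ}
    (hF : HasFDerivAt F A (z₀.re, z₀.im)) (hG : HasFDerivAt G B (z₀.re, z₀.im))
    (h1 : A (1, 0) = B (0, 1)) (h2 : A (0, 1) = -(B (1, 0))) :
    HasDerivAt (fun z : ℂ => (F (z.re, z.im) : ℂ) + (G (z.re, z.im) : ℂ) * Complex.I)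
      ((A (1, 0) : ℂ) + (B (1, 0) : ℂ) * Complex.I) z₀ := by
  set e : ℂ →L[ℝ] ℝ × ℝ := Complex.equivRealProdCLM.toContinuousLinearMap with he'
  have he : HasFDerivAt (fun z : ℂ => (z.re, z.im)) e z₀ := e.hasFDerivAt
  have hFc : HasFDerivAt (fun z : ℂ => (F (z.re, z.im) : ℂ))
      (Complex.ofRealCLM.comp (A.comp e)) z₀ :=
    Complex.ofRealCLM.hasFDerivAt.comp z₀ (hF.comp z₀ he)
  have hGc : HasFDerivAt (fun z : ℂ => (G (z.re, z.im) : ℂ))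
      (Complex.ofRealCLM.comp (B.comp e)) z₀ :=
    Complex.ofRealCLM.hasFDerivAt.comp z₀ (hG.comp z₀ he)
  have hφ := hFc.add (hGc.mul_const Complex.I)
  set L := Complex.ofRealCLM.comp (A.comp e) +
      Complex.I • Complex.ofRealCLM.comp (B.comp e) with hLdef
  set c : ℂ := (A (1, 0) : ℂ) + (B (1, 0) : ℂ) * Complex.I with hc
  have hL1 : L 1 = c := by
    simp [hLdef, hc, he']
    try ring
  have hLI : L Complex.I = Complex.I * c := by
    simp [hLdef, hc, he', h1, h2]
    linear_combination (-(B (1, 0) : ℂ)) * Complex.I_sq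
  have hL : ∀ w : ℂ, L w = w * c := by
    intro w
    have hw : (w.re : ℂ) + (w.im : ℂ) * Complex.I = w := Complex.re_add_im w
    have hsm : w = w.re • (1 : ℂ) + w.im • Complex.I := by
      simp [Complex.real_smul, hw]
    calc L w = L (w.re • (1 : ℂ) + w.im • Complex.I) := by rw [← hsm]
    _ = w.re • L 1 + w.im • L Complex.I := by rw [map_add, _root_.map_smul, _root_.map_smul]
    _ = w * c := by
        rw [hL1, hLI]
        simp only [Complex.real_smul]
        linear_combination c * hw
  rw [hasDerivAt_iff_isLittleO]
  have h := hφ.isLittleO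
  refine h.congr' (Filter.Eventually.of_forall fun x => ?_) (Filter.Eventually.of_forall fun x => rfl)
  simp only [hL, smul_eq_mul, Pi.add_apply]


lemma diff_side {ψ γ : ℝ → ℂ} {α β : ℝ} (hαβ : α ≤ β)
    (hψ : ContinuousOn ψ (Icc α β)) (hγ : ContinuousOn γ (Icc α β))
    {w₀ : ℂ} (hw : ∀ t ∈ Icc α β, γ t ≠ w₀) :
    DifferentiableAt ℂ (fun w => ∫ t : ℝ in α..β, ψ t / (γ t - w)) w₀ := by
  have hcomp : IsCompact (Icc α β) := isCompact_Icc
  have hIcc : (Set.uIoc α β) ⊆ Icc α β := by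
    rw [Set.uIoc_of_le hαβ]; exact Ioc_subset_Icc_self
  have hne : α ∈ Icc α β := ⟨le_refl α, hαβ⟩
  have hcontn : ContinuousOn (fun t => ‖γ t - w₀‖) (Icc α β) :=
    (hγ.sub continuousOn_const).norm
  obtain ⟨t₀, ht₀, hmin⟩ := hcomp.exists_isMinOn ⟨α, hne⟩ hcontn
  set m := ‖γ t₀ - w₀‖ with hm
  have hm0 : 0 < m := norm_pos_iff.2 (sub_ne_zero.2 (hw t₀ ht₀))
  obtain ⟨C, hC0, hC⟩ : ∃ C, 0 < C ∧ ∀ t ∈ Icc α β, ‖ψ t‖ ≤ C := by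
    obtain ⟨C, hC⟩ := hcomp.exists_bound_of_continuousOn hψ
    exact ⟨max C 1, lt_of_lt_of_le zero_lt_one (le_max_right _ _),
      fun t ht => (hC t ht).trans (le_max_left _ _)⟩
  have hden : ∀ t ∈ Icc α β, ∀ w ∈ ball w₀ (m / 2), m / 2 ≤ ‖γ t - w‖ := by
    intro t ht w hwball
    have h1 : m ≤ ‖γ t - w₀‖ := hmin ht
    have h2 : ‖w - w₀‖ < m / 2 := by simpa [mem_ball, dist_eq_norm] using hwball
    have h3 := norm_sub_norm_le (γ t - w₀) (w - w₀)
    have h4 : γ t - w₀ - (w - w₀) = γ t - w := by ring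
    rw [h4] at h3
    linarith
  have hden0 : ∀ t ∈ Icc α β, ∀ w ∈ ball w₀ (m / 2), γ t - w ≠ 0 := by
    intro t ht w hwb
    have := hden t ht w hwb
    intro hz
    rw [hz, norm_zero] at this
    linarith
  have key := intervalIntegral.hasDerivAt_integral_of_dominated_loc_of_deriv_le
    (F := fun w t => ψ t / (γ t - w)) (F' := fun w t => ψ t / (γ t - w) ^ 2)
    (x₀ := w₀) (s := ball w₀ (m / 2)) (bound := fun _ => C / (m / 2) ^ 2)
    (a := α) (b := β) (μ := volume) (ball_mem_nhds w₀ (by positivity))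
    ?_ ?_ ?_ ?_ ?_ ?_
  · exact key.2.differentiableAt
  · refine eventually_of_mem (ball_mem_nhds w₀ (show (0:ℝ) < m/2 by positivity)) (fun w hwb => ?_)
    have hcw : ContinuousOn (fun t => ψ t / (γ t - w)) (Icc α β) :=
      hψ.div (hγ.sub continuousOn_const) (fun t ht => hden0 t ht w hwb)
    exact (hcw.aestronglyMeasurable measurableSet_Icc).mono_measure
      (Measure.restrict_mono hIcc le_rfl)
  · refine (ContinuousOn.intervalIntegrable ?_)
    rw [Set.uIcc_of_le hαβ]
    exact hψ.div (hγ.sub continuousOn_const)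
      (fun t ht => hden0 t ht w₀ (mem_ball_self (by positivity)))
  · have hcw : ContinuousOn (fun t => ψ t / (γ t - w₀) ^ 2) (Icc α β) :=
      hψ.div ((hγ.sub continuousOn_const).pow 2)
        (fun t ht => pow_ne_zero 2 (hden0 t ht w₀ (mem_ball_self (by positivity))))
    exact (hcw.aestronglyMeasurable measurableSet_Icc).mono_measure
      (Measure.restrict_mono hIcc le_rfl)
  · refine MeasureTheory.ae_of_all _ (fun t ht w hwb => ?_)
    have ht' := hIcc ht
    rw [norm_div, norm_pow]
    refine div_le_div₀ hC0.le (hC t ht') (by positivity) ?_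
    exact pow_le_pow_left₀ (by positivity) (hden t ht' w hwb) 2
  · exact intervalIntegrable_const
  · refine MeasureTheory.ae_of_all _ (fun t ht w hwb => ?_)
    have ht' := hIcc ht
    have h1 : HasDerivAt (fun w : ℂ => γ t - w) (-1) w := by
      simpa using (hasDerivAt_id w).const_sub (γ t)
    have h2 := h1.inv (hden0 t ht' w hwb)
    have h3 := h2.const_mul (ψ t)
    have h4 : -(-1 : ℂ) / (γ t - w) ^ 2 = ((γ t - w) ^ 2)⁻¹ := by
      rw [neg_neg, one_div]
    rw [h4] at h3
    simpa [div_eq_mul_inv] using h3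


lemma integral_affine_inv {σ k : ℂ} (hσ : σ ≠ 0) {α β : ℝ}
    (hmem : ∀ t ∈ uIcc α β, σ * t + k ∈ slitPlane) :
    ∫ t : ℝ in α..β, (σ * t + k)⁻¹
      = σ⁻¹ * (Complex.log (σ * β + k) - Complex.log (σ * α + k)) := by
  have hderiv : ∀ t ∈ uIcc α β,
      HasDerivAt (fun s : ℝ => σ⁻¹ * Complex.log (σ * s + k)) ((σ * t + k)⁻¹) t := by
    intro t ht
    have hinner : HasDerivAt (fun z : ℂ => σ * z + k) σ (t : ℂ) := by
      simpa using ((hasDerivAt_id (t : ℂ)).const_mul σ).add_const k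
    have hlog := (Complex.hasDerivAt_log (hmem t ht)).comp (t : ℂ) hinner
    have h2 := (hlog.const_mul σ⁻¹).comp_ofReal
    have h3 : σ⁻¹ * ((σ * ↑t + k)⁻¹ * σ) = (σ * ↑t + k)⁻¹ := by
      field_simp
    rwa [h3] at h2
  have hint : IntervalIntegrable (fun t : ℝ => (σ * t + k)⁻¹) volume α β := by
    refine ContinuousOn.intervalIntegrable ?_
    refine ContinuousOn.inv₀ ?_ (fun t ht => slitPlane_ne_zero (hmem t ht))
    exact ((continuous_const.mul Complex.continuous_ofReal).continuousOn).add continuousOn_const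
  have := intervalIntegral.integral_eq_sub_of_hasDerivAt hderiv hint
  rw [this]
  ring

lemma winding (a b c d : ℝ) (w₀ : ℂ) (ha : a < w₀.re) (hb : w₀.re < b)
    (hc : c < w₀.im) (hd : w₀.im < d) :
    ((∫ t : ℝ in a..b, (↑t + ↑c * I - w₀)⁻¹) - (∫ t : ℝ in a..b, (↑t + ↑d * I - w₀)⁻¹))
      + I * (∫ s : ℝ in c..d, (↑b + ↑s * I - w₀)⁻¹)
      - I * (∫ s : ℝ in c..d, (↑a + ↑s * I - w₀)⁻¹)
      = 2 * Real.pi * I := by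
  have him : ∀ (r : ℝ), ((1:ℂ) * ↑(r:ℝ)) = (r:ℂ) := fun r => one_mul _
  -- bottom
  have hbot : (∫ t : ℝ in a..b, (↑t + ↑c * I - w₀)⁻¹)
      = Complex.log ((1:ℂ) * ↑b + (↑c*I - w₀)) - Complex.log ((1:ℂ) * ↑a + (↑c*I - w₀)) := by
    have h := integral_affine_inv (σ := 1) (k := ↑c*I - w₀) one_ne_zero (α := a) (β := b)
      (fun t ht => Or.inr (by
        simp only [Complex.add_im, Complex.sub_im, Complex.ofReal_im, Complex.mul_im,
          Complex.ofReal_re, Complex.I_im, Complex.I_re]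
        simp only [one_mul, mul_zero, mul_one, zero_mul, add_zero, zero_add, zero_sub, sub_zero]
        intro h'
        simp at h'
        linarith))
    rw [inv_one, one_mul] at h
    rw [← h]
    apply intervalIntegral.integral_congr
    intro t ht
    congr 1
    ring
  -- top
  have htop : (∫ t : ℝ in a..b, (↑t + ↑d * I - w₀)⁻¹)
      = Complex.log ((1:ℂ) * ↑b + (↑d*I - w₀)) - Complex.log ((1:ℂ) * ↑a + (↑d*I - w₀)) := by
    have h := integral_affine_inv (σ := 1) (k := ↑d*I - w₀) one_ne_zero (α := a) (β := b)
      (fun t ht => Or.inr (by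
        simp only [Complex.add_im, Complex.sub_im, Complex.ofReal_im, Complex.mul_im,
          Complex.ofReal_re, Complex.I_im, Complex.I_re]
        simp only [one_mul, mul_zero, mul_one, zero_mul, add_zero, zero_add, zero_sub, sub_zero]
        intro h'
        simp at h'
        linarith))
    rw [inv_one, one_mul] at h
    rw [← h]
    apply intervalIntegral.integral_congr
    intro t ht
    congr 1
    ring
  -- right
  have hright : (∫ s : ℝ in c..d, (↑b + ↑s * I - w₀)⁻¹)
      = I⁻¹ * (Complex.log (I * ↑d + (↑b - w₀)) - Complex.log (I * ↑c + (↑b - w₀))) := by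
    have h := integral_affine_inv (σ := I) (k := ↑b - w₀) I_ne_zero (α := c) (β := d)
      (fun t ht => Or.inl (by
        simp only [Complex.add_re, Complex.sub_re, Complex.ofReal_re, Complex.mul_re,
          Complex.ofReal_im, Complex.I_im, Complex.I_re]
        simp only [one_mul, mul_zero, mul_one, zero_mul, add_zero, zero_add, zero_sub, sub_zero]
        linarith))
    rw [← h]
    apply intervalIntegral.integral_congr
    intro t ht
    congr 1
    ring
  -- left
  have hleft : (∫ s : ℝ in c..d, (↑a + ↑s * I - w₀)⁻¹)
      = -((-I)⁻¹ * (Complex.log ((-I) * ↑d + (w₀ - ↑a)) - Complex.log ((-I) * ↑c + (w₀ - ↑a)))) := by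
    have h := integral_affine_inv (σ := -I) (k := w₀ - ↑a) (neg_ne_zero.2 I_ne_zero)
      (α := c) (β := d)
      (fun t ht => Or.inl (by
        simp only [Complex.add_re, Complex.sub_re, Complex.ofReal_re, Complex.mul_re,
          Complex.ofReal_im, Complex.I_im, Complex.I_re, Complex.neg_re, Complex.neg_im]
        simp only [one_mul, mul_zero, mul_one, zero_mul, add_zero, zero_add, zero_sub, sub_zero,
          neg_zero, neg_neg]
        linarith))
    rw [← h, ← intervalIntegral.integral_neg]
    apply intervalIntegral.integral_congr
    intro t ht
    show (↑a + ↑t * I - w₀)⁻¹ = -(-I * ↑t + (w₀ - ↑a))⁻¹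
    rw [← inv_neg]
    congr 1
    ring
  rw [hbot, htop, hright, hleft]
  -- identify the log arguments
  set β₁ : ℂ := ↑a + ↑c * I - w₀ with hβ₁
  set β₂ : ℂ := ↑a + ↑d * I - w₀ with hβ₂
  set B₁ : ℂ := ↑b + ↑c * I - w₀ with hB₁
  set B₂ : ℂ := ↑b + ↑d * I - w₀ with hB₂
  have e1 : (1:ℂ) * ↑a + (↑c*I - w₀) = β₁ := by rw [hβ₁]; ring
  have e2 : (1:ℂ) * ↑a + (↑d*I - w₀) = β₂ := by rw [hβ₂]; ring
  have e3 : (-I) * ↑d + (w₀ - ↑a) = -β₂ := by rw [hβ₂]; ring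
  have e4 : (-I) * ↑c + (w₀ - ↑a) = -β₁ := by rw [hβ₁]; ring
  have e5 : (1:ℂ) * ↑b + (↑c*I - w₀) = B₁ := by rw [hB₁]; ring
  have e6 : (1:ℂ) * ↑b + (↑d*I - w₀) = B₂ := by rw [hB₂]; ring
  have e7 : I * ↑d + (↑b - w₀) = B₂ := by rw [hB₂]; ring
  have e8 : I * ↑c + (↑b - w₀) = B₁ := by rw [hB₁]; ring
  rw [e1, e2, e3, e4, e5, e6, e7, e8]
  have him1 : β₁.im < 0 := by
    rw [hβ₁]
    simp [Complex.add_im, Complex.sub_im]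
    linarith
  have him2 : 0 < β₂.im := by
    rw [hβ₂]
    simp [Complex.add_im, Complex.sub_im]
    linarith
  have hlog1 : Complex.log (-β₁) = Complex.log β₁ + Real.pi * I := by
    apply Complex.ext
    · simp [Complex.log_re]
    · simp [Complex.log_im, Complex.arg_neg_eq_arg_add_pi_of_im_neg him1]
  have hlog2 : Complex.log (-β₂) = Complex.log β₂ - Real.pi * I := by
    apply Complex.ext
    · simp [Complex.log_re]
    · simp [Complex.log_im, Complex.arg_neg_eq_arg_sub_pi_of_im_pos him2]
  rw [hlog1, hlog2]
  rw [Complex.inv_I, inv_neg, Complex.inv_I, neg_neg]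
  ring_nf
  rw [show (I:ℂ)^3 = -I from by rw [pow_succ, Complex.I_sq]; ring]
  ring_nf
  rw [Complex.I_sq]
  ring


lemma side_split {g : ℂ → ℂ} {w₀ : ℂ} {γ : ℝ → ℂ} {α β : ℝ} (hαβ : α ≤ β)
    (hγ : ContinuousOn γ (Icc α β)) (hgc : ContinuousOn (fun t => g (γ t)) (Icc α β))
    (hne : ∀ t ∈ Icc α β, γ t ≠ w₀) :
    (∫ t : ℝ in α..β, dslope g w₀ (γ t))
      = (∫ t : ℝ in α..β, g (γ t) / (γ t - w₀))
        - g w₀ * (∫ t : ℝ in α..β, (γ t - w₀)⁻¹) := by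
  have hsub : ∀ t ∈ Icc α β, γ t - w₀ ≠ 0 := fun t ht => sub_ne_zero.2 (hne t ht)
  have hinv : ContinuousOn (fun t => (γ t - w₀)⁻¹) (Icc α β) :=
    (hγ.sub continuousOn_const).inv₀ hsub
  have hint1 : IntervalIntegrable (fun t => g (γ t) / (γ t - w₀)) volume α β := by
    apply ContinuousOn.intervalIntegrable
    rw [uIcc_of_le hαβ]
    exact hgc.div (hγ.sub continuousOn_const) hsub
  have hint2 : IntervalIntegrable (fun t => g w₀ * (γ t - w₀)⁻¹) volume α β := by
    apply ContinuousOn.intervalIntegrable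
    rw [uIcc_of_le hαβ]
    exact continuousOn_const.mul hinv
  have heq : EqOn (fun t => dslope g w₀ (γ t))
      (fun t => g (γ t) / (γ t - w₀) - g w₀ * (γ t - w₀)⁻¹) (uIcc α β) := by
    intro t ht
    rw [uIcc_of_le hαβ] at ht
    show dslope g w₀ (γ t) = _
    rw [dslope_of_ne g (hne t ht), slope_def_field, sub_div, div_eq_mul_inv (g w₀)]
  rw [intervalIntegral.integral_congr heq,
    intervalIntegral.integral_sub hint1 hint2, intervalIntegral.integral_const_mul]

lemma core {g : ℂ → ℂ} {a b c d : ℝ} (hab : a < b) (hcd : c < d)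
    (hgc : ContinuousOn g (Icc a b ×ℂ Icc c d))
    (hgd : ∀ z ∈ Ioo a b ×ℂ Ioo c d, DifferentiableAt ℂ g z)
    (htop : ∀ t ∈ Icc a b, g (↑t + ↑d * I) = 0)
    {w₀ : ℂ} (hw₀re : w₀.re ∈ Ioo a b) (hw₀im : w₀.im ∈ Ioo c d) : g w₀ = 0 := by
  -- coordinates of side points
  have hreB : ∀ (t cc : ℝ), ((↑t + ↑cc * I : ℂ)).re = t := by intro t cc; simp
  have himB : ∀ (t cc : ℝ), ((↑t + ↑cc * I : ℂ)).im = cc := by intro t cc; simp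
  -- side membership
  have hmemB : ∀ cc ∈ Icc c d, ∀ t ∈ Icc a b, (↑t + ↑cc * I : ℂ) ∈ Icc a b ×ℂ Icc c d := by
    intro cc hcc t ht
    rw [Complex.mem_reProdIm, hreB, himB]
    exact ⟨ht, hcc⟩
  -- specialization of the rectangle Cauchy-Goursat theorem
  have rect : ∀ f : ℂ → ℂ, ContinuousOn f (Icc a b ×ℂ Icc c d) →
      DifferentiableOn ℂ f (Ioo a b ×ℂ Ioo c d) →
      ((∫ t : ℝ in a..b, f (↑t + ↑c * I)) - (∫ t : ℝ in a..b, f (↑t + ↑d * I)))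
        + I * (∫ s : ℝ in c..d, f (↑b + ↑s * I))
        - I * (∫ s : ℝ in c..d, f (↑a + ↑s * I)) = 0 := by
    intro f hc' hd'
    have h := Complex.integral_boundary_rect_eq_zero_of_continuousOn_of_differentiableOn f
      (↑a + ↑c * I) (↑b + ↑d * I)
      (by rw [hreB, hreB, himB, himB, uIcc_of_le hab.le, uIcc_of_le hcd.le]; exact hc')
      (by rw [hreB, hreB, himB, himB, min_eq_left hab.le, max_eq_right hab.le,
            min_eq_left hcd.le, max_eq_right hcd.le]; exact hd')
    rw [hreB, hreB, himB, himB] at h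
    simpa [smul_eq_mul] using h
  -- continuity of g along the four sides
  have hpathB : ∀ cc : ℝ, Continuous (fun t : ℝ => (↑t + ↑cc * I : ℂ)) := by
    intro cc
    exact Complex.continuous_ofReal.add continuous_const
  have hpathV : ∀ r : ℝ, Continuous (fun s : ℝ => (↑r + ↑s * I : ℂ)) := by
    intro r
    exact continuous_const.add (Complex.continuous_ofReal.mul continuous_const)
  have hgB : ∀ cc ∈ Icc c d, ContinuousOn (fun t : ℝ => g (↑t + ↑cc * I)) (Icc a b) := by
    intro cc hcc
    exact hgc.comp (hpathB cc).continuousOn (fun t ht => hmemB cc hcc t ht)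
  have hgV : ∀ r ∈ Icc a b, ContinuousOn (fun s : ℝ => g (↑r + ↑s * I)) (Icc c d) := by
    intro r hr
    refine hgc.comp (hpathV r).continuousOn (fun s hs => ?_)
    rw [Complex.mem_reProdIm]
    constructor
    · simpa using hr
    · simpa using hs
  -- membership of w₀
  have hw₀mem : w₀ ∈ Ioo a b ×ℂ Ioo c d := Complex.mem_reProdIm.2 ⟨hw₀re, hw₀im⟩
  -- the three-sided Cauchy transform
  set K : ℂ → ℂ := fun w =>
    (∫ t : ℝ in a..b, g (↑t + ↑c * I) / (↑t + ↑c * I - w))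
    + I * (∫ s : ℝ in c..d, g (↑b + ↑s * I) / (↑b + ↑s * I - w))
    - I * (∫ s : ℝ in c..d, g (↑a + ↑s * I) / (↑a + ↑s * I - w)) with hK
  have hKdiff : ∀ w ∈ Ioo a b ×ℂ Ioi c, DifferentiableAt ℂ K w := by
    intro w hw
    rw [Complex.mem_reProdIm] at hw
    have h1 := diff_side (ψ := fun t : ℝ => g (↑t + ↑c * I)) (γ := fun t : ℝ => ↑t + ↑c * I)
      hab.le (hgB c ⟨le_refl c, hcd.le⟩) (hpathB c).continuousOn
      (w₀ := w) (fun t ht heq => by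
        have := congrArg Complex.im heq
        rw [himB] at this
        have h2 := hw.2
        rw [← this] at h2
        exact lt_irrefl _ (mem_Ioi.1 h2))
    have h2 := diff_side (ψ := fun s : ℝ => g (↑b + ↑s * I)) (γ := fun s : ℝ => ↑b + ↑s * I)
      hcd.le (hgV b ⟨hab.le, le_refl b⟩) (hpathV b).continuousOn
      (w₀ := w) (fun s hs heq => by
        have := congrArg Complex.re heq
        simp at this
        have h2 := hw.1.2
        rw [← this] at h2
        exact lt_irrefl _ h2)
    have h3 := diff_side (ψ := fun s : ℝ => g (↑a + ↑s * I)) (γ := fun s : ℝ => ↑a + ↑s * I)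
      hcd.le (hgV a ⟨le_refl a, hab.le⟩) (hpathV a).continuousOn
      (w₀ := w) (fun s hs heq => by
        have := congrArg Complex.re heq
        simp at this
        have h2 := hw.1.1
        rw [← this] at h2
        exact lt_irrefl _ h2)
    exact (h1.add (h2.const_mul I)).sub (h3.const_mul I)
  have hKzero : ∀ w ∈ Ioo a b ×ℂ Ioi d, K w = 0 := by
    intro w hw
    rw [Complex.mem_reProdIm] at hw
    have hne : ∀ z ∈ Icc a b ×ℂ Icc c d, z - w ≠ 0 := by
      intro z hz heq
      rw [Complex.mem_reProdIm] at hz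
      rw [sub_eq_zero] at heq
      have h2 := hz.2.2
      rw [heq] at h2
      exact absurd hw.2 (not_lt.2 h2)
    have hcont : ContinuousOn (fun z => g z / (z - w)) (Icc a b ×ℂ Icc c d) :=
      hgc.div (continuousOn_id.sub continuousOn_const) hne
    have hdiff : DifferentiableOn ℂ (fun z => g z / (z - w)) (Ioo a b ×ℂ Ioo c d) := by
      intro z hz
      have hz' : z ∈ Icc a b ×ℂ Icc c d := by
        rw [Complex.mem_reProdIm] at hz ⊢
        exact ⟨Ioo_subset_Icc_self hz.1, Ioo_subset_Icc_self hz.2⟩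
      exact ((hgd z hz).div (differentiableAt_id.sub (differentiableAt_const w))
        (hne z hz')).differentiableWithinAt
    have h0 := rect _ hcont hdiff
    have htopz : (∫ t : ℝ in a..b, g (↑t + ↑d * I) / (↑t + ↑d * I - w)) = 0 := by
      have heq0 : EqOn (fun t : ℝ => g (↑t + ↑d * I) / (↑t + ↑d * I - w))
          (fun _ => (0 : ℂ)) (uIcc a b) := by
        intro t ht
        rw [uIcc_of_le hab.le] at ht
        show g (↑t + ↑d * I) / (↑t + ↑d * I - w) = 0
        rw [htop t ht, zero_div]
      rw [intervalIntegral.integral_congr heq0]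
      simp
    rw [htopz] at h0
    rw [hK]
    linear_combination h0
  -- K is zero at w₀ by the identity theorem
  have hSopen : IsOpen (Ioo a b ×ℂ Ioi c) := IsOpen.reProdIm isOpen_Ioo isOpen_Ioi
  have hKanal : AnalyticOnNhd ℂ K (Ioo a b ×ℂ Ioi c) :=
    DifferentiableOn.analyticOnNhd (fun w hw => (hKdiff w hw).differentiableWithinAt) hSopen
  have hz₁re : (a + b) / 2 ∈ Ioo a b := ⟨by linarith, by linarith⟩
  set z₁ : ℂ := ↑((a + b) / 2) + ↑(d + 1) * I with hz₁
  have hz₁mem' : z₁ ∈ Ioo a b ×ℂ Ioi d := by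
    rw [Complex.mem_reProdIm, hz₁, hreB, himB]
    exact ⟨hz₁re, by simp⟩
  have hz₁mem : z₁ ∈ Ioo a b ×ℂ Ioi c := by
    rw [Complex.mem_reProdIm, hz₁, hreB, himB]
    exact ⟨hz₁re, by simp only [mem_Ioi]; linarith⟩
  have hev : K =ᶠ[nhds z₁] 0 :=
    Filter.eventually_of_mem ((IsOpen.reProdIm isOpen_Ioo isOpen_Ioi).mem_nhds hz₁mem')
      (fun w hw => hKzero w hw)
  have hKS : EqOn K 0 (Ioo a b ×ℂ Ioi c) :=
    hKanal.eqOn_zero_of_preconnected_of_eventuallyEq_zero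
      (convex_reProdIm (convex_Ioo a b) (convex_Ioi c)).isPreconnected hz₁mem hev
  have hKw₀ : K w₀ = 0 := hKS (by
    rw [Complex.mem_reProdIm]
    exact ⟨hw₀re, hw₀im.1⟩)
  rw [hK] at hKw₀
  simp only at hKw₀
  -- dslope integral is zero
  have hnhds' : (Ioo a b ×ℂ Ioo c d) ∈ nhds w₀ :=
    (IsOpen.reProdIm isOpen_Ioo isOpen_Ioo).mem_nhds hw₀mem
  have hnhds : (Icc a b ×ℂ Icc c d) ∈ nhds w₀ := by
    refine Filter.mem_of_superset hnhds' ?_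
    intro z hz
    rw [Complex.mem_reProdIm] at hz ⊢
    exact ⟨Ioo_subset_Icc_self hz.1, Ioo_subset_Icc_self hz.2⟩
  have hgw₀ : DifferentiableAt ℂ g w₀ := hgd w₀ hw₀mem
  have hφc : ContinuousOn (dslope g w₀) (Icc a b ×ℂ Icc c d) :=
    (continuousOn_dslope hnhds).2 ⟨hgc, hgw₀⟩
  have hφd : DifferentiableOn ℂ (dslope g w₀) (Ioo a b ×ℂ Ioo c d) :=
    (differentiableOn_dslope hnhds').2 (fun z hz => (hgd z hz).differentiableWithinAt)
  have hφ0 := rect _ hφc hφd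
  -- side non-hitting facts for w₀
  have hneB : ∀ t ∈ Icc a b, (↑t + ↑c * I : ℂ) ≠ w₀ := by
    intro t ht heq
    have := congrArg Complex.im heq
    rw [himB] at this
    rw [← this] at hw₀im
    exact lt_irrefl _ hw₀im.1
  have hneT : ∀ t ∈ Icc a b, (↑t + ↑d * I : ℂ) ≠ w₀ := by
    intro t ht heq
    have := congrArg Complex.im heq
    rw [himB] at this
    rw [← this] at hw₀im
    exact lt_irrefl _ hw₀im.2
  have hneR : ∀ s ∈ Icc c d, (↑b + ↑s * I : ℂ) ≠ w₀ := by
    intro s hs heq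
    have := congrArg Complex.re heq
    simp at this
    rw [← this] at hw₀re
    exact lt_irrefl _ hw₀re.2
  have hneL : ∀ s ∈ Icc c d, (↑a + ↑s * I : ℂ) ≠ w₀ := by
    intro s hs heq
    have := congrArg Complex.re heq
    simp at this
    rw [← this] at hw₀re
    exact lt_irrefl _ hw₀re.1
  -- expand the four sides
  have hsB := side_split (g := g) (w₀ := w₀) (γ := fun t : ℝ => ↑t + ↑c * I) hab.le
    (hpathB c).continuousOn (hgB c ⟨le_refl c, hcd.le⟩) hneB
  have hsT := side_split (g := g) (w₀ := w₀) (γ := fun t : ℝ => ↑t + ↑d * I) hab.le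
    (hpathB d).continuousOn (hgB d ⟨hcd.le, le_refl d⟩) hneT
  have hsR := side_split (g := g) (w₀ := w₀) (γ := fun s : ℝ => ↑b + ↑s * I) hcd.le
    (hpathV b).continuousOn (hgV b ⟨hab.le, le_refl b⟩) hneR
  have hsL := side_split (g := g) (w₀ := w₀) (γ := fun s : ℝ => ↑a + ↑s * I) hcd.le
    (hpathV a).continuousOn (hgV a ⟨le_refl a, hab.le⟩) hneL
  rw [hsB, hsT, hsR, hsL] at hφ0
  -- g vanishes along the top side at w₀ too
  have hGtop : (∫ t : ℝ in a..b, g (↑t + ↑d * I) / (↑t + ↑d * I - w₀)) = 0 := by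
    have heq0 : EqOn (fun t : ℝ => g (↑t + ↑d * I) / (↑t + ↑d * I - w₀))
        (fun _ => (0 : ℂ)) (uIcc a b) := by
      intro t ht
      rw [uIcc_of_le hab.le] at ht
      show g (↑t + ↑d * I) / (↑t + ↑d * I - w₀) = 0
      rw [htop t ht, zero_div]
    rw [intervalIntegral.integral_congr heq0]
    simp
  rw [hGtop] at hφ0
  have hwind := winding a b c d w₀ hw₀re.1 hw₀re.2 hw₀im.1 hw₀im.2
  -- conclude
  have hfinal : g w₀ * (2 * Real.pi * I) = 0 := by
    linear_combination hKw₀ - hφ0 - g w₀ * hwind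
  rcases mul_eq_zero.1 hfinal with h | h
  · exact h
  · exfalso
    have : (2 * Real.pi * I : ℂ) ≠ 0 := by
      simp [Real.pi_ne_zero, Complex.I_ne_zero]
    exact this h



section helpers

/-- a continuous function vanishing on a set vanishes on its closure points -/
lemma zero_on_closure {φ : ℝ × ℝ → ℝ} {R : Set (ℝ × ℝ)} {p : ℝ × ℝ}
    (hφ : ContinuousAt φ p) (h0 : ∀ q ∈ R, φ q = 0) (hp : p ∈ closure R) : φ p = 0 := by
  have h1 : Tendsto φ (nhdsWithin p R) (nhds (φ p)) := hφ.continuousWithinAt.tendsto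
  have hne : (nhdsWithin p R).NeBot := mem_closure_iff_nhdsWithin_neBot.1 hp
  have h2 : Tendsto φ (nhdsWithin p R) (nhds 0) := by
    refine Tendsto.congr' ?_ tendsto_const_nhds
    exact eventually_nhdsWithin_of_forall (fun q hq => (h0 q hq).symm)
  exact tendsto_nhds_unique h1 h2

/-- a CLM on ℝ² vanishing on the standard basis is zero -/
lemma clm_eq_zero {T : ℝ × ℝ →L[ℝ] ℝ} (h1 : T (1, 0) = 0) (h2 : T (0, 1) = 0) : T = 0 := by
  refine ContinuousLinearMap.ext fun q => ?_
  have hq : (q : ℝ × ℝ) = q.1 • ((1 : ℝ), (0 : ℝ)) + q.2 • ((0 : ℝ), (1 : ℝ)) := by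
    ext <;> simp
  rw [hq, map_add, _root_.map_smul, _root_.map_smul, h1, h2]
  simp

variable {u : ℝ × ℝ → ℝ} {U : Set (ℝ × ℝ)} (hU : IsOpen U) (hsm : ContDiffOn ℝ 2 u U)

include hU hsm

lemma hasFDerivAt_of_C2 {p : ℝ × ℝ} (hp : p ∈ U) : HasFDerivAt u (fderiv ℝ u p) p :=
  ((hsm.differentiableOn two_ne_zero).differentiableAt (hU.mem_nhds hp)).hasFDerivAt

lemma diffAt_fderiv {p : ℝ × ℝ} (hp : p ∈ U) : DifferentiableAt ℝ (fderiv ℝ u) p := by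
  have h1 : ContDiffOn ℝ 1 (fderiv ℝ u) U := hsm.fderiv_of_isOpen hU (by norm_num)
  exact (h1.differentiableOn one_ne_zero).differentiableAt (hU.mem_nhds hp)

lemma hasFDerivAt_dirderiv {p : ℝ × ℝ} (hp : p ∈ U) (v : ℝ × ℝ) :
    HasFDerivAt (fun q => fderiv ℝ u q v)
      ((ContinuousLinearMap.apply ℝ ℝ v).comp (fderiv ℝ (fderiv ℝ u) p)) p :=
  (ContinuousLinearMap.apply ℝ ℝ v).hasFDerivAt.comp p (diffAt_fderiv hU hsm hp).hasFDerivAt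

lemma second_symm {p : ℝ × ℝ} (hp : p ∈ U) (v w : ℝ × ℝ) :
    fderiv ℝ (fderiv ℝ u) p v w = fderiv ℝ (fderiv ℝ u) p w v := by
  have hev : ∀ᶠ q in nhds p, HasFDerivAt u (fderiv ℝ u q) q :=
    eventually_of_mem (hU.mem_nhds hp) (fun q hq => hasFDerivAt_of_C2 hU hsm hq)
  exact second_derivative_symmetric_of_eventually hev (diffAt_fderiv hU hsm hp).hasFDerivAt v w

lemma d2_eq {p : ℝ × ℝ} (hp : p ∈ U) (v : ℝ × ℝ) :
    d2 u v p = fderiv ℝ (fderiv ℝ u) p v v := by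
  rw [d2, (hasFDerivAt_dirderiv hU hsm hp v).fderiv]
  rfl

lemma fderiv_dirderiv_eq {p : ℝ × ℝ} (hp : p ∈ U) (v w : ℝ × ℝ) :
    fderiv ℝ (fun q => fderiv ℝ u q v) p w = fderiv ℝ (fderiv ℝ u) p w v := by
  rw [(hasFDerivAt_dirderiv hU hsm hp v).fderiv]
  rfl

lemma cont_dirderiv (v : ℝ × ℝ) : ContinuousOn (fun q => fderiv ℝ u q v) U := by
  have h1 : ContinuousOn (fderiv ℝ u) U := hsm.continuousOn_fderiv_of_isOpen hU one_le_two
  exact h1.clm_apply continuousOn_const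

omit hU hsm in
/-- derivative along a horizontal line where u vanishes -/
lemma fderiv_horiz_zero {x yy l : ℝ} (hu : DifferentiableAt ℝ u (x, yy))
    (hzero : ∀ t ∈ Ioo 0 l, u (t, yy) = 0) (hx : x ∈ Ioo 0 l) :
    fderiv ℝ u (x, yy) (1, 0) = 0 := by
  have h1 : HasDerivAt (fun t : ℝ => (t, yy)) ((1 : ℝ), (0 : ℝ)) x :=
    (hasDerivAt_id x).prodMk (hasDerivAt_const x yy)
  have hline : HasDerivAt (fun t : ℝ => u (t, yy)) (fderiv ℝ u (x, yy) (1, 0)) x :=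
    hu.hasFDerivAt.comp_hasDerivAt x h1
  have hev : (fun t : ℝ => u (t, yy)) =ᶠ[nhds x] (fun _ => (0 : ℝ)) :=
    eventually_of_mem (isOpen_Ioo.mem_nhds hx) (fun t ht => hzero t ht)
  have hline' : HasDerivAt (fun _ : ℝ => (0 : ℝ)) (fderiv ℝ u (x, yy) (1, 0)) x :=
    hline.congr_of_eventuallyEq hev.symm
  exact hline'.unique (hasDerivAt_const x 0)

end helpers

/-- A harmonic, divergence-free vector field `v = (u1, u2)` on the rectangle
`(0,l) × (-h,h)`, smooth up to the boundary, which vanishes on the two horizontal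
boundary segments, is identically zero in the rectangle. -/
theorem stmt_4 (l h : ℝ) (hl : 0 < l) (hh : 0 < h)
    (u1 u2 : ℝ × ℝ → ℝ) (U : Set (ℝ × ℝ)) (hU : IsOpen U)
    (hcl : closure (Ioo 0 l ×ˢ Ioo (-h) h) ⊆ U)
    (hsm1 : ContDiffOn ℝ 2 u1 U) (hsm2 : ContDiffOn ℝ 2 u2 U)
    (hharm1 : ∀ p ∈ Ioo 0 l ×ˢ Ioo (-h) h, d2 u1 (1, 0) p + d2 u1 (0, 1) p = 0)
    (hharm2 : ∀ p ∈ Ioo 0 l ×ˢ Ioo (-h) h, d2 u2 (1, 0) p + d2 u2 (0, 1) p = 0)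
    (hdiv : ∀ p ∈ Ioo 0 l ×ˢ Ioo (-h) h,
      fderiv ℝ u1 p (1, 0) + fderiv ℝ u2 p (0, 1) = 0)
    (hb : ∀ x ∈ Ioo 0 l,
      u1 (x, h) = 0 ∧ u1 (x, -h) = 0 ∧ u2 (x, h) = 0 ∧ u2 (x, -h) = 0) :
    ∀ p ∈ Ioo 0 l ×ˢ Ioo (-h) h, u1 p = 0 ∧ u2 p = 0 := by
  intro p hp
  set R : Set (ℝ × ℝ) := Ioo 0 l ×ˢ Ioo (-h) h with hR
  have hRopen : IsOpen R := isOpen_Ioo.prod isOpen_Ioo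
  have hRsubU : R ⊆ U := subset_closure.trans hcl
  have hclosR : closure R = Icc 0 l ×ˢ Icc (-h) h := by
    rw [hR, closure_prod_eq, closure_Ioo hl.ne, closure_Ioo (by linarith : (-h) ≠ h)]
  have hmemcl : ∀ q : ℝ × ℝ, q.1 ∈ Icc 0 l → q.2 ∈ Icc (-h) h → q ∈ closure R := by
    intro q h1 h2
    rw [hclosR]
    exact ⟨h1, h2⟩
  have hmemU : ∀ q : ℝ × ℝ, q.1 ∈ Icc 0 l → q.2 ∈ Icc (-h) h → q ∈ U :=
    fun q h1 h2 => hcl (hmemcl q h1 h2)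
  have hp1 : p.1 ∈ Ioo 0 l := hp.1
  have hp2 : p.2 ∈ Ioo (-h) h := hp.2
  -- edge facts
  have hedge : ∀ yy : ℝ, (yy = h ∨ yy = -h) → ∀ x ∈ Ioo 0 l,
      fderiv ℝ u1 (x, yy) (1, 0) = 0 ∧ fderiv ℝ u2 (x, yy) (1, 0) = 0 ∧
        fderiv ℝ u2 (x, yy) (0, 1) = 0 := by
    intro yy hyy x hx
    have hyIcc : yy ∈ Icc (-h) h := by
      rcases hyy with rfl | rfl
      · exact ⟨by linarith, le_refl _⟩
      · exact ⟨le_refl _, by linarith⟩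
    have hxIcc : x ∈ Icc 0 l := ⟨hx.1.le, hx.2.le⟩
    have hmem : (x, yy) ∈ U := hmemU (x, yy) hxIcc hyIcc
    have hu1d : DifferentiableAt ℝ u1 (x, yy) :=
      (hsm1.differentiableOn two_ne_zero).differentiableAt (hU.mem_nhds hmem)
    have hu2d : DifferentiableAt ℝ u2 (x, yy) :=
      (hsm2.differentiableOn two_ne_zero).differentiableAt (hU.mem_nhds hmem)
    have hz1 : ∀ t ∈ Ioo 0 l, u1 (t, yy) = 0 := by
      intro t ht
      rcases hyy with rfl | rfl
      · exact (hb t ht).1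
      · exact (hb t ht).2.1
    have hz2 : ∀ t ∈ Ioo 0 l, u2 (t, yy) = 0 := by
      intro t ht
      rcases hyy with rfl | rfl
      · exact (hb t ht).2.2.1
      · exact (hb t ht).2.2.2
    have h1 := fderiv_horiz_zero (l := l) hu1d hz1 hx
    have h2 := fderiv_horiz_zero (l := l) hu2d hz2 hx
    have hdivcont : ContinuousOn
        (fun q => fderiv ℝ u1 q (1, 0) + fderiv ℝ u2 q (0, 1)) U :=
      (cont_dirderiv hU hsm1 (1, 0)).add (cont_dirderiv hU hsm2 (0, 1))
    have hφp : fderiv ℝ u1 (x, yy) (1, 0) + fderiv ℝ u2 (x, yy) (0, 1) = 0 :=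
      zero_on_closure (hdivcont.continuousAt (hU.mem_nhds hmem)) hdiv
        (hmemcl (x, yy) hxIcc hyIcc)
    refine ⟨h1, h2, by linarith⟩
  -- gradient of u2 vanishes on R
  have hgradu2 : ∀ q ∈ R, fderiv ℝ u2 q (1, 0) = 0 ∧ fderiv ℝ u2 q (0, 1) = 0 := by
    intro q hq
    have hq1 : q.1 ∈ Ioo 0 l := hq.1
    have hq2 : q.2 ∈ Ioo (-h) h := hq.2
    set F : ℝ × ℝ → ℝ := fun r => fderiv ℝ u2 r (1, 0) with hF
    set G : ℝ × ℝ → ℝ := fun r => -(fderiv ℝ u2 r (0, 1)) with hG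
    set g : ℂ → ℂ := fun z => (F (z.re, z.im) : ℂ) + (G (z.re, z.im) : ℂ) * Complex.I with hg
    set a : ℝ := q.1 / 2 with ha
    set b : ℝ := (q.1 + l) / 2 with hbb
    set c : ℝ := (q.2 - h) / 2 with hc
    have hab : a < b := by rw [ha, hbb]; linarith [hq1.1, hq1.2]
    have hcd : c < h := by rw [hc]; linarith [hq2.1, hq2.2]
    have hsubIccx : Icc a b ⊆ Icc 0 l := by
      apply Icc_subset_Icc
      · rw [ha]; linarith [hq1.1]
      · rw [hbb]; linarith [hq1.2]
    have hsubIccy : Icc c h ⊆ Icc (-h) h := by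
      apply Icc_subset_Icc
      · rw [hc]; linarith [hq2.1]
      · exact le_refl h
    have hsubU : ∀ z ∈ Icc a b ×ℂ Icc c h, ((z.re, z.im) : ℝ × ℝ) ∈ U := by
      intro z hz
      rw [Complex.mem_reProdIm] at hz
      exact hmemU _ (hsubIccx hz.1) (hsubIccy hz.2)
    have hsubR : ∀ z ∈ Ioo a b ×ℂ Ioo c h, ((z.re, z.im) : ℝ × ℝ) ∈ R := by
      intro z hz
      rw [Complex.mem_reProdIm] at hz
      constructor
      · exact ⟨lt_of_le_of_lt (by rw [ha]; linarith [hq1.1]) hz.1.1,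
          lt_of_lt_of_le hz.1.2 (by rw [hbb]; linarith [hq1.2])⟩
      · exact ⟨lt_of_le_of_lt (by rw [hc]; linarith [hq2.1]) hz.2.1, hz.2.2⟩
    have hmapc : Continuous (fun z : ℂ => ((z.re, z.im) : ℝ × ℝ)) :=
      Complex.continuous_re.prodMk Complex.continuous_im
    have hgcont : ContinuousOn g (Icc a b ×ℂ Icc c h) := by
      have hFc : ContinuousOn (fun z : ℂ => (F (z.re, z.im) : ℂ)) (Icc a b ×ℂ Icc c h) :=
        Complex.continuous_ofReal.comp_continuousOn
          (((cont_dirderiv hU hsm2 (1, 0))).comp hmapc.continuousOn hsubU)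
      have hGc : ContinuousOn (fun z : ℂ => (G (z.re, z.im) : ℂ)) (Icc a b ×ℂ Icc c h) :=
        Complex.continuous_ofReal.comp_continuousOn
          (((cont_dirderiv hU hsm2 (0, 1)).neg).comp hmapc.continuousOn hsubU)
      exact hFc.add (hGc.mul continuousOn_const)
    have hgdiff : ∀ z ∈ Ioo a b ×ℂ Ioo c h, DifferentiableAt ℂ g z := by
      intro z hz
      have hzR : ((z.re, z.im) : ℝ × ℝ) ∈ R := hsubR z hz
      have hzU : ((z.re, z.im) : ℝ × ℝ) ∈ U := hRsubU hzR
      have hFd : HasFDerivAt F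
          ((ContinuousLinearMap.apply ℝ ℝ ((1 : ℝ), (0 : ℝ))).comp
            (fderiv ℝ (fderiv ℝ u2) (z.re, z.im))) (z.re, z.im) :=
        hasFDerivAt_dirderiv hU hsm2 hzU (1, 0)
      have hGd : HasFDerivAt G
          (-((ContinuousLinearMap.apply ℝ ℝ ((0 : ℝ), (1 : ℝ))).comp
            (fderiv ℝ (fderiv ℝ u2) (z.re, z.im)))) (z.re, z.im) :=
        (hasFDerivAt_dirderiv hU hsm2 hzU (0, 1)).neg
      have hharm := hharm2 (z.re, z.im) hzR
      rw [d2_eq hU hsm2 hzU, d2_eq hU hsm2 hzU] at hharm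
      have hsymm := second_symm hU hsm2 hzU (1, 0) (0, 1)
      have hCR1 : ((ContinuousLinearMap.apply ℝ ℝ ((1 : ℝ), (0 : ℝ))).comp
          (fderiv ℝ (fderiv ℝ u2) (z.re, z.im))) (1, 0)
          = (-((ContinuousLinearMap.apply ℝ ℝ ((0 : ℝ), (1 : ℝ))).comp
            (fderiv ℝ (fderiv ℝ u2) (z.re, z.im)))) (0, 1) := by
        simp only [ContinuousLinearMap.comp_apply, ContinuousLinearMap.apply_apply,
          ContinuousLinearMap.neg_apply]
        linarith
      have hCR2 : ((ContinuousLinearMap.apply ℝ ℝ ((1 : ℝ), (0 : ℝ))).comp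
          (fderiv ℝ (fderiv ℝ u2) (z.re, z.im))) (0, 1)
          = -((-((ContinuousLinearMap.apply ℝ ℝ ((0 : ℝ), (1 : ℝ))).comp
            (fderiv ℝ (fderiv ℝ u2) (z.re, z.im)))) (1, 0)) := by
        simp only [ContinuousLinearMap.comp_apply, ContinuousLinearMap.apply_apply,
          ContinuousLinearMap.neg_apply, neg_neg]
        linarith
      exact (hasDerivAt_of_CR hFd hGd hCR1 hCR2).differentiableAt
    have htopz : ∀ t ∈ Icc a b, g (↑t + ↑h * Complex.I) = 0 := by
      intro t ht
      have htl : t ∈ Ioo 0 l := by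
        have h0a : (0:ℝ) < a := by rw [ha]; linarith [hq1.1]
        have hbl : b < l := by rw [hbb]; linarith [hq1.2]
        exact ⟨by linarith [ht.1], by linarith [ht.2]⟩
      obtain ⟨e1, e2, e3⟩ := hedge h (Or.inl rfl) t htl
      simp only [hg]
      have hre : ((↑t + ↑h * Complex.I : ℂ)).re = t := by simp
      have him : ((↑t + ↑h * Complex.I : ℂ)).im = h := by simp
      rw [hre, him]
      rw [hF, hG]
      simp only [e2, e3, neg_zero, Complex.ofReal_zero, zero_add, zero_mul]
    have hw₀re : ((↑q.1 + ↑q.2 * Complex.I : ℂ)).re ∈ Ioo a b := by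
      simp only [Complex.add_re, Complex.ofReal_re, Complex.mul_re, Complex.ofReal_im,
        Complex.I_re, Complex.I_im]
      constructor
      · rw [ha]; simp; linarith [hq1.1]
      · rw [hbb]; simp; linarith [hq1.2]
    have hw₀im : ((↑q.1 + ↑q.2 * Complex.I : ℂ)).im ∈ Ioo c h := by
      simp only [Complex.add_im, Complex.ofReal_im, Complex.mul_im, Complex.ofReal_re,
        Complex.I_re, Complex.I_im]
      constructor
      · rw [hc]; simp; linarith [hq2.1, hq2.2]
      · simp; linarith [hq2.2]
    have hzero := core hab hcd hgcont hgdiff htopz hw₀re hw₀im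
    simp only [hg] at hzero
    have hre : ((↑q.1 + ↑q.2 * Complex.I : ℂ)).re = q.1 := by simp
    have him : ((↑q.1 + ↑q.2 * Complex.I : ℂ)).im = q.2 := by simp
    rw [hre, him] at hzero
    have hqeta : ((q.1, q.2) : ℝ × ℝ) = q := rfl
    rw [hqeta] at hzero
    have hzre := congrArg Complex.re hzero
    have hzim := congrArg Complex.im hzero
    simp at hzre hzim
    constructor
    · exact hzre
    · rw [hG] at hzim
      simpa using hzim
  -- u2 is constant on R, hence zero
  have hconv : Convex ℝ R := (convex_Ioo 0 l).prod (convex_Ioo (-h) h)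
  have hu2diffR : DifferentiableOn ℝ u2 R := (hsm2.differentiableOn two_ne_zero).mono hRsubU
  have hu2const : ∀ q ∈ R, u2 q = u2 p := by
    intro q hq
    refine hconv.is_const_of_fderivWithin_eq_zero hu2diffR (fun r hr => ?_) hq hp
    rw [fderivWithin_of_isOpen hRopen hr]
    exact clm_eq_zero (hgradu2 r hr).1 (hgradu2 r hr).2
  have hptop : ((p.1, h) : ℝ × ℝ) ∈ closure R :=
    hmemcl (p.1, h) ⟨hp1.1.le, hp1.2.le⟩ ⟨by linarith, le_refl h⟩
  have hpbot : ((p.1, -h) : ℝ × ℝ) ∈ closure R :=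
    hmemcl (p.1, -h) ⟨hp1.1.le, hp1.2.le⟩ ⟨le_refl (-h), show (-h:ℝ) ≤ h by linarith⟩
  have hu2p : u2 p = 0 := by
    have hcont : ContinuousAt (fun r : ℝ × ℝ => u2 r - u2 p) (p.1, h) := by
      have := (hsm2.continuousOn.continuousWithinAt (hcl hptop)).continuousAt
        (hU.mem_nhds (hcl hptop))
      exact this.sub continuousAt_const
    have hz := zero_on_closure hcont (fun r hr => by rw [hu2const r hr]; ring) hptop
    have hb1 := (hb p.1 hp1).2.2.1
    simp only [hb1] at hz
    linarith
  -- gradient structure of u1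
  have hu1x : ∀ q ∈ R, fderiv ℝ u1 q (1, 0) = 0 := by
    intro q hq
    have hd := hdiv q hq
    have h2 := (hgradu2 q hq).2
    linarith
  set c₀ : ℝ := fderiv ℝ u1 p (0, 1) with hc₀
  have hu1yconst : ∀ q ∈ R, fderiv ℝ u1 q (0, 1) = c₀ := by
    have hψdiff : DifferentiableOn ℝ (fun r => fderiv ℝ u1 r (0, 1)) R := fun r hr =>
      (hasFDerivAt_dirderiv hU hsm1 (hRsubU hr) (0, 1)).differentiableAt.differentiableWithinAt
    have hψf : ∀ r ∈ R, fderivWithin ℝ (fun r => fderiv ℝ u1 r (0, 1)) R r = 0 := by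
      intro r hr
      rw [fderivWithin_of_isOpen hRopen hr]
      have hu1xev : (fun r => fderiv ℝ u1 r (1, 0)) =ᶠ[nhds r] (fun _ => (0 : ℝ)) :=
        eventually_of_mem (hRopen.mem_nhds hr) hu1x
      have hu1xzero : fderiv ℝ (fun r => fderiv ℝ u1 r (1, 0)) r = 0 := by
        rw [hu1xev.fderiv_eq]
        exact fderiv_const_apply 0
      have hkey : ∀ w : ℝ × ℝ, fderiv ℝ (fderiv ℝ u1) r w (1, 0) = 0 := by
        intro w
        rw [← fderiv_dirderiv_eq hU hsm1 (hRsubU hr) (1, 0) w, hu1xzero]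
        rfl
      apply clm_eq_zero
      · -- mixed partial
        rw [fderiv_dirderiv_eq hU hsm1 (hRsubU hr) (0, 1) (1, 0),
          second_symm hU hsm1 (hRsubU hr) (1, 0) (0, 1)]
        exact hkey (0, 1)
      · -- pure yy second derivative via harmonicity
        rw [fderiv_dirderiv_eq hU hsm1 (hRsubU hr) (0, 1) (0, 1)]
        have hharm := hharm1 r hr
        rw [d2_eq hU hsm1 (hRsubU hr), d2_eq hU hsm1 (hRsubU hr)] at hharm
        have := hkey (1, 0)
        linarith
    intro q hq
    exact hconv.is_const_of_fderivWithin_eq_zero hψdiff hψf hq hp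
  -- v := u1 - c₀ * y is constant on R
  set v : ℝ × ℝ → ℝ := fun r => u1 r - c₀ * r.2 with hv
  have hsndC : Continuous (fun r : ℝ × ℝ => c₀ * r.2) := continuous_const.mul continuous_snd
  have hvfderiv : ∀ r ∈ R, HasFDerivAt v
      (fderiv ℝ u1 r - c₀ • (ContinuousLinearMap.snd ℝ ℝ ℝ)) r := by
    intro r hr
    have hu1r : HasFDerivAt u1 (fderiv ℝ u1 r) r := hasFDerivAt_of_C2 hU hsm1 (hRsubU hr)
    have hsnd : HasFDerivAt (fun r : ℝ × ℝ => c₀ * r.2)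
        (c₀ • (ContinuousLinearMap.snd ℝ ℝ ℝ)) r :=
      (ContinuousLinearMap.snd ℝ ℝ ℝ).hasFDerivAt.const_mul c₀
    exact hu1r.sub hsnd
  have hvdiffR : DifferentiableOn ℝ v R := fun r hr =>
    (hvfderiv r hr).differentiableAt.differentiableWithinAt
  have hvconst : ∀ q ∈ R, v q = v p := by
    intro q hq
    refine hconv.is_const_of_fderivWithin_eq_zero hvdiffR (fun r hr => ?_) hq hp
    rw [fderivWithin_of_isOpen hRopen hr, (hvfderiv r hr).fderiv]
    apply clm_eq_zero
    · simp [hu1x r hr]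
    · simp [hu1yconst r hr]
  have hvcont : ∀ yy : ℝ, ((p.1, yy) : ℝ × ℝ) ∈ closure R →
      ContinuousAt (fun r : ℝ × ℝ => v r - v p) (p.1, yy) := by
    intro yy hcls
    have h1 : ContinuousAt u1 (p.1, yy) :=
      (hsm1.continuousOn.continuousWithinAt (hcl hcls)).continuousAt (hU.mem_nhds (hcl hcls))
    exact ((h1.sub hsndC.continuousAt).sub continuousAt_const)
  have htopv : v p = -(c₀ * h) := by
    have hz := zero_on_closure (hvcont h hptop) (fun r hr => by rw [hvconst r hr]; ring) hptop
    have hb1 := (hb p.1 hp1).1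
    simp only [hv, hb1] at hz
    simp only [hv]
    linarith
  have hbotv : v p = c₀ * h := by
    have hz := zero_on_closure (hvcont (-h) hpbot) (fun r hr => by rw [hvconst r hr]; ring) hpbot
    have hb1 := (hb p.1 hp1).2.1
    simp only [hv, hb1] at hz
    simp only [hv]
    linarith
  have hc0 : c₀ = 0 := by
    have h2 : c₀ * h = 0 := by linarith
    rcases mul_eq_zero.1 h2 with h3 | h3
    · exact h3
    · exact absurd h3 hh.ne'
  have hu1p : u1 p = 0 := by
    have h1 : v p = 0 := by rw [htopv, hc0]; ring
    have h2 : u1 p - c₀ * p.2 = 0 := h1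
    rw [hc0] at h2
    linarith
  exact ⟨hu1p, hu2p⟩
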